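/- Let p ≥ 5 be prime and k with 2 ≤ k ≤ p-1, k ≠ 9 (and k ≢ 1, 9 mod p). With f_1(x) = x^2 - 4x, f_k(x) = x^2 - 2(k+1)x + (k-1)^2, and g_k(x) = x(4k x^2 + (k^2-6k-3)x + 4), one has ∑_{x=0}^{p-1} (f_1(x) f_k(x)/p) = -1 + ∑_{x=0}^{p-1} (g_k(x)/p). -/

import Mathlib

open Finset

section Helpers

variable {p : ℕ} [Fact p.Prime]

private lemma char_ne_two' (hp : 5 ≤ p) : ringChar (ZMod p) ≠ 2 := by
  rw [ZMod.ringChar_zmod_n]; omega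

private lemma two_ne_zero'' (hp : 5 ≤ p) : (2 : ZMod p) ≠ 0 := by
  have : ((2 : ℕ) : ZMod p) ≠ 0 := by
    rw [Ne, ZMod.natCast_eq_zero_iff]
    intro h
    have := Nat.le_of_dvd (by norm_num) h
    omega
  simpa using this

/-- Reindex a sum over `range p` as a sum over `ZMod p`. -/
private lemma sum_range_eq (f : ZMod p → ℤ) :
    ∑ x ∈ Finset.range p, f (x : ZMod p) = ∑ x : ZMod p, f x := by
  have hp0 : 0 < p := (Fact.out : p.Prime).pos
  refine Finset.sum_nbij' (fun x => (x : ZMod p)) (fun y => y.val) ?_ ?_ ?_ ?_ ?_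
  · intro a _; exact Finset.mem_univ _
  · intro b _; exact Finset.mem_range.mpr (ZMod.val_lt b)
  · intro a ha
    exact ZMod.val_cast_of_lt (Finset.mem_range.mp ha)
  · intro b _
    exact ZMod.natCast_rightInverse b
  · intro a _; rfl

/-- An affine change of variables in a full sum. -/
private lemma sum_affine (a b : ZMod p) (ha : a ≠ 0) (f : ZMod p → ℤ) :
    ∑ x : ZMod p, f (a * x + b) = ∑ x : ZMod p, f x := by
  apply Fintype.sum_bijective (fun x => a * x + b)
  · constructor
    · intro x y h
      simp only [add_left_inj] at h
      exact mul_left_cancel₀ ha h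
    · intro y
      exact ⟨a⁻¹ * (y - b), by field_simp; ring⟩
  · intro x; rfl

private lemma chi_sq_mul (c t : ZMod p) (hc : c ≠ 0) :
    quadraticChar (ZMod p) (c ^ 2 * t) = quadraticChar (ZMod p) t := by
  rw [map_mul, quadraticChar_sq_one' hc, one_mul]

/-- The classical 2-isogeny character sum identity:
`∑ χ(x(x²+Ax+B)) = ∑ χ(x(x²-2Ax+A²-4B))` for `B ≠ 0`. -/
private lemma key (hp : 5 ≤ p) (A B : ZMod p) (hB : B ≠ 0) :
    ∑ x : ZMod p, quadraticChar (ZMod p) (x * (x ^ 2 + A * x + B)) =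
    ∑ x : ZMod p, quadraticChar (ZMod p) (x * (x ^ 2 - 2 * A * x + (A ^ 2 - 4 * B))) := by
  set χ := quadraticChar (ZMod p) with hχ
  have h2 : (2 : ZMod p) ≠ 0 := two_ne_zero'' hp
  have h4 : (4 : ZMod p) ≠ 0 := by
    have : (4 : ZMod p) = 2 * 2 := by norm_num
    rw [this]; exact mul_ne_zero h2 h2
  -- Step 1: restrict to x ≠ 0 and rewrite the summand as χ(x + B/x + A)
  have step1 : ∑ x : ZMod p, χ (x * (x ^ 2 + A * x + B)) =
      ∑ x ∈ (Finset.univ.erase (0 : ZMod p)), χ (x + B * x⁻¹ + A) := by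
    rw [← Finset.sum_erase_add _ _ (Finset.mem_univ (0 : ZMod p))]
    have : χ ((0 : ZMod p) * (0 ^ 2 + A * 0 + B)) = 0 := by
      rw [zero_mul]; exact quadraticChar_zero
    rw [this, add_zero]
    apply Finset.sum_congr rfl
    intro x hx
    have hx0 : x ≠ 0 := Finset.ne_of_mem_erase hx
    have hxx : x * (x ^ 2 + A * x + B) = x ^ 2 * (x + B * x⁻¹ + A) := by
      field_simp; ring
    rw [hxx, chi_sq_mul _ _ hx0]
  -- Step 2: the fiber parametrization via pairs (t, y) with y² = t² - 4B
  have step2 : ∑ x ∈ (Finset.univ.erase (0 : ZMod p)), χ (x + B * x⁻¹ + A) =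
      ∑ q ∈ Finset.univ.filter (fun q : ZMod p × ZMod p => q.2 ^ 2 = q.1 ^ 2 - 4 * B),
        χ (q.1 + A) := by
    refine Finset.sum_nbij' (fun x => (x + B * x⁻¹, x - B * x⁻¹))
      (fun q => (q.1 + q.2) * 2⁻¹) ?_ ?_ ?_ ?_ ?_
    · intro x hx
      have hx0 : x ≠ 0 := Finset.ne_of_mem_erase hx
      simp only [Finset.mem_filter, Finset.mem_univ, true_and]
      field_simp
      ring
    · intro q hq
      simp only [Finset.mem_filter, Finset.mem_univ, true_and] at hq
      have hsum : q.1 + q.2 ≠ 0 := by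
        intro h
        have h1 : q.1 = -q.2 := by linear_combination h
        rw [h1] at hq
        have hB4 : (4 : ZMod p) * B = 0 := by linear_combination hq
        rcases mul_eq_zero.mp hB4 with h' | h'
        · exact h4 h'
        · exact hB h'
      apply Finset.mem_erase.mpr
      refine ⟨mul_ne_zero hsum (inv_ne_zero h2), Finset.mem_univ _⟩
    · intro x hx
      have hx0 : x ≠ 0 := Finset.ne_of_mem_erase hx
      field_simp
      ring
    · intro q hq
      simp only [Finset.mem_filter, Finset.mem_univ, true_and] at hq
      have hsum : q.1 + q.2 ≠ 0 := by
        intro h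
        have h1 : q.1 = -q.2 := by linear_combination h
        rw [h1] at hq
        have hB4 : (4 : ZMod p) * B = 0 := by linear_combination hq
        rcases mul_eq_zero.mp hB4 with h' | h'
        · exact h4 h'
        · exact hB h'
      have hx0 : (q.1 + q.2) * 2⁻¹ ≠ 0 := mul_ne_zero hsum (inv_ne_zero h2)
      have h4B : (q.1 + q.2) * (q.1 - q.2) = 4 * B := by linear_combination -hq
      have hmain : ((q.1 - q.2) * 2⁻¹) * ((q.1 + q.2) * 2⁻¹) = B := by
        calc ((q.1 - q.2) * 2⁻¹) * ((q.1 + q.2) * 2⁻¹)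
            = ((q.1 + q.2) * (q.1 - q.2)) * (2 * 2)⁻¹ := by rw [mul_inv]; ring
          _ = 4 * B * (4 : ZMod p)⁻¹ := by rw [h4B]; norm_num
          _ = B := by rw [mul_comm (4 : ZMod p) B, mul_assoc, mul_inv_cancel₀ h4, mul_one]
      have hBx : B * ((q.1 + q.2) * 2⁻¹)⁻¹ = (q.1 - q.2) * 2⁻¹ := by
        rw [← hmain, mul_assoc, mul_inv_cancel₀ hx0, mul_one]
      ext
      · show (q.1 + q.2) * 2⁻¹ + B * ((q.1 + q.2) * 2⁻¹)⁻¹ = q.1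
        rw [hBx]; field_simp; ring
      · show (q.1 + q.2) * 2⁻¹ - B * ((q.1 + q.2) * 2⁻¹)⁻¹ = q.2
        rw [hBx]; field_simp; ring
    · intro x _; rfl
  -- Step 3: count the fibers with the quadratic character
  have step3 : ∑ q ∈ Finset.univ.filter (fun q : ZMod p × ZMod p => q.2 ^ 2 = q.1 ^ 2 - 4 * B),
      χ (q.1 + A) = ∑ t : ZMod p, (χ (t ^ 2 - 4 * B) + 1) * χ (t + A) := by
    rw [Finset.sum_filter, Fintype.sum_prod_type]
    apply Finset.sum_congr rfl
    intro t _
    have : ∑ y : ZMod p, (if y ^ 2 = t ^ 2 - 4 * B then χ (t + A) else 0) =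
        ((Finset.univ.filter (fun y : ZMod p => y ^ 2 = t ^ 2 - 4 * B)).card : ℤ) *
          χ (t + A) := by
      rw [← Finset.sum_filter, Finset.sum_const, nsmul_eq_mul]
    rw [this]
    congr 1
    have hcard := quadraticChar_card_sqrts (char_ne_two' hp) (t ^ 2 - 4 * B)
    rw [Set.toFinset_setOf] at hcard
    rw [hcard]
  -- Step 4: expand and use that the full sum of χ vanishes
  have step4 : ∑ t : ZMod p, (χ (t ^ 2 - 4 * B) + 1) * χ (t + A) =
      ∑ x : ZMod p, χ (x * (x ^ 2 - 2 * A * x + (A ^ 2 - 4 * B))) := by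
    have expand : ∀ t : ZMod p, (χ (t ^ 2 - 4 * B) + 1) * χ (t + A) =
        χ ((t + A) * ((t + A) ^ 2 - 2 * A * (t + A) + (A ^ 2 - 4 * B))) + χ (t + A) := by
      intro t
      have harg : (t + A) * ((t + A) ^ 2 - 2 * A * (t + A) + (A ^ 2 - 4 * B)) =
          (t ^ 2 - 4 * B) * (t + A) := by ring
      rw [harg, map_mul, add_mul, one_mul]
    rw [Finset.sum_congr rfl (fun t _ => expand t), Finset.sum_add_distrib]
    have hz : ∑ t : ZMod p, χ (t + A) = 0 := by
      have := sum_affine (p := p) 1 A one_ne_zero (fun t => χ t)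
      simp only [one_mul] at this
      rw [this]
      exact quadraticChar_sum_zero (char_ne_two' hp)
    rw [hz, add_zero]
    have hs := sum_affine (p := p) 1 A one_ne_zero
      (fun x => χ (x * (x ^ 2 - 2 * A * x + (A ^ 2 - 4 * B))))
    simp only [one_mul] at hs
    exact hs
  rw [step1, step2, step3, step4]

end Helpers

theorem eps_eq_gk_sum (p : ℕ) [Fact p.Prime] (hp : 5 ≤ p) (k : ℤ)
    (hk : 2 ≤ k ∧ k ≤ (p : ℤ) - 1)
    (hk1 : (k : ZMod p) ≠ 1) (hk9 : (k : ZMod p) ≠ 9) :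
    ∑ x ∈ Finset.range p,
      legendreSym p (((x : ℤ) ^ 2 - 4 * x) *
        ((x : ℤ) ^ 2 - 2 * (k + 1) * x + (k - 1) ^ 2)) =
    -1 + ∑ x ∈ Finset.range p,
      legendreSym p ((x : ℤ) * (4 * k * x ^ 2 + (k ^ 2 - 6 * k - 3) * x + 4)) := by
  set χ := quadraticChar (ZMod p) with hχ
  set K : ZMod p := (k : ZMod p) with hK
  have h2 : (2 : ZMod p) ≠ 0 := two_ne_zero'' hp
  have h4 : (4 : ZMod p) ≠ 0 := by
    have : (4 : ZMod p) = 2 * 2 := by norm_num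
    rw [this]; exact mul_ne_zero h2 h2
  have hK0 : K ≠ 0 := by
    rw [hK, Ne, ZMod.intCast_zmod_eq_zero_iff_dvd]
    intro hdvd
    have := Int.le_of_dvd (by omega) hdvd
    omega
  have hK1 : K - 1 ≠ 0 := sub_ne_zero.mpr hk1
  have hK9 : K - 9 ≠ 0 := sub_ne_zero.mpr hk9
  -- abbreviations
  set A : ZMod p := K ^ 2 - 6 * K - 3 with hA
  set D : ZMod p := (K - 1) ^ 3 * (K - 9) with hD
  have hD0 : D ≠ 0 := mul_ne_zero (pow_ne_zero 3 hK1) hK9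
  -- Left-hand side as a sum over ZMod p
  have lhs_eq : ∑ x ∈ Finset.range p,
      legendreSym p (((x : ℤ) ^ 2 - 4 * x) *
        ((x : ℤ) ^ 2 - 2 * (k + 1) * x + (k - 1) ^ 2)) =
      ∑ x : ZMod p, χ ((x ^ 2 - 4 * x) * (x ^ 2 - 2 * (K + 1) * x + (K - 1) ^ 2)) := by
    rw [← sum_range_eq (fun y => χ ((y ^ 2 - 4 * y) * (y ^ 2 - 2 * (K + 1) * y + (K - 1) ^ 2)))]
    apply Finset.sum_congr rfl
    intro x _
    show χ _ = χ _
    congr 1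
    push_cast
    ring
  -- Right-hand side as a sum over ZMod p
  have rhs_eq : ∑ x ∈ Finset.range p,
      legendreSym p ((x : ℤ) * (4 * k * x ^ 2 + (k ^ 2 - 6 * k - 3) * x + 4)) =
      ∑ x : ZMod p, χ (x * (4 * K * x ^ 2 + A * x + 4)) := by
    rw [← sum_range_eq (fun y => χ (y * (4 * K * y ^ 2 + A * y + 4)))]
    apply Finset.sum_congr rfl
    intro x _
    show χ _ = χ _
    congr 1
    rw [hA, hK]
    push_cast
    ring
  rw [lhs_eq, rhs_eq]
  -- Step 1: invert x to turn the quartic into a cubic C(u) = (1-4u)((K-1)²u²-2(K+1)u+1)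
  have inv_step : ∑ x : ZMod p, χ ((x ^ 2 - 4 * x) * (x ^ 2 - 2 * (K + 1) * x + (K - 1) ^ 2)) =
      -1 + ∑ u : ZMod p, χ ((1 - 4 * u) * ((K - 1) ^ 2 * u ^ 2 - 2 * (K + 1) * u + 1)) := by
    have hL : ∑ x : ZMod p, χ ((x ^ 2 - 4 * x) * (x ^ 2 - 2 * (K + 1) * x + (K - 1) ^ 2)) =
        ∑ x ∈ Finset.univ.erase (0 : ZMod p),
          χ ((x ^ 2 - 4 * x) * (x ^ 2 - 2 * (K + 1) * x + (K - 1) ^ 2)) := by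
      rw [← Finset.sum_erase_add _ _ (Finset.mem_univ (0 : ZMod p))]
      have : (((0 : ZMod p) ^ 2 - 4 * 0) * ((0:ZMod p) ^ 2 - 2 * (K + 1) * 0 + (K - 1) ^ 2))
          = 0 := by ring
      rw [this, quadraticChar_zero, add_zero]
    have hR : ∑ u : ZMod p, χ ((1 - 4 * u) * ((K - 1) ^ 2 * u ^ 2 - 2 * (K + 1) * u + 1)) =
        (∑ u ∈ Finset.univ.erase (0 : ZMod p),
          χ ((1 - 4 * u) * ((K - 1) ^ 2 * u ^ 2 - 2 * (K + 1) * u + 1))) + 1 := by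
      rw [← Finset.sum_erase_add _ _ (Finset.mem_univ (0 : ZMod p))]
      have : ((1 - 4 * (0:ZMod p)) * ((K - 1) ^ 2 * (0:ZMod p) ^ 2 - 2 * (K + 1) * 0 + 1))
          = 1 := by ring
      rw [this, map_one]
    have hbij : ∑ x ∈ Finset.univ.erase (0 : ZMod p),
        χ ((x ^ 2 - 4 * x) * (x ^ 2 - 2 * (K + 1) * x + (K - 1) ^ 2)) =
        ∑ u ∈ Finset.univ.erase (0 : ZMod p),
          χ ((1 - 4 * u) * ((K - 1) ^ 2 * u ^ 2 - 2 * (K + 1) * u + 1)) := by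
      refine Finset.sum_nbij' (fun x => x⁻¹) (fun u => u⁻¹) ?_ ?_ ?_ ?_ ?_
      · intro x hx
        exact Finset.mem_erase.mpr ⟨inv_ne_zero (Finset.ne_of_mem_erase hx), Finset.mem_univ _⟩
      · intro u hu
        exact Finset.mem_erase.mpr ⟨inv_ne_zero (Finset.ne_of_mem_erase hu), Finset.mem_univ _⟩
      · intro x hx; exact inv_inv x
      · intro u hu; exact inv_inv u
      · intro x hx
        have hx0 : x ≠ 0 := Finset.ne_of_mem_erase hx
        have hid : (x ^ 2 - 4 * x) * (x ^ 2 - 2 * (K + 1) * x + (K - 1) ^ 2) =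
            (x ^ 2) ^ 2 * ((1 - 4 * x⁻¹) * ((K - 1) ^ 2 * (x⁻¹) ^ 2 - 2 * (K + 1) * x⁻¹ + 1)) := by
          field_simp
          ring
        rw [hid, chi_sq_mul _ _ (pow_ne_zero 2 hx0)]
    rw [hL, hbij, hR]
    ring
  rw [inv_step]
  congr 1
  -- Step 2: affine substitution u = -(4(K-1)²)⁻¹ v + 4⁻¹ turns C into v(v² - 2Av + D)
  have haff1 : ∑ u : ZMod p, χ ((1 - 4 * u) * ((K - 1) ^ 2 * u ^ 2 - 2 * (K + 1) * u + 1)) =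
      ∑ v : ZMod p, χ (v * (v ^ 2 - 2 * A * v + D)) := by
    have hα : -(4 * (K - 1) ^ 2)⁻¹ ≠ 0 :=
      neg_ne_zero.mpr (inv_ne_zero (mul_ne_zero h4 (pow_ne_zero 2 hK1)))
    have := sum_affine (-(4 * (K - 1) ^ 2)⁻¹) (4 : ZMod p)⁻¹ hα
      (fun u => χ ((1 - 4 * u) * ((K - 1) ^ 2 * u ^ 2 - 2 * (K + 1) * u + 1)))
    rw [← this]
    apply Finset.sum_congr rfl
    intro v _
    show χ _ = χ _
    have hid : (1 - 4 * (-(4 * (K - 1) ^ 2)⁻¹ * v + (4:ZMod p)⁻¹)) *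
        ((K - 1) ^ 2 * (-(4 * (K - 1) ^ 2)⁻¹ * v + (4:ZMod p)⁻¹) ^ 2 -
          2 * (K + 1) * (-(4 * (K - 1) ^ 2)⁻¹ * v + (4:ZMod p)⁻¹) + 1) =
        ((4 * (K - 1) ^ 2)⁻¹) ^ 2 * (v * (v ^ 2 - 2 * A * v + D)) := by
      have h4K : 4 * (K - 1) ^ 2 ≠ 0 := mul_ne_zero h4 (pow_ne_zero 2 hK1)
      field_simp
      rw [hA, hD]
      ring
    rw [hid, chi_sq_mul _ _ (inv_ne_zero (mul_ne_zero h4 (pow_ne_zero 2 hK1)))]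
  rw [haff1]
  -- Step 3: the 2-isogeny identity with A' = -2A, B' = D
  have hkey := key hp (-2 * A) D hD0
  have hAD : A ^ 2 - D = 64 * K := by rw [hA, hD]; ring
  have hkey' : ∑ v : ZMod p, χ (v * (v ^ 2 - 2 * A * v + D)) =
      ∑ x : ZMod p, χ (x * (x ^ 2 + 4 * A * x + 256 * K)) := by
    have e1 : ∀ v : ZMod p, v * (v ^ 2 + (-2 * A) * v + D) = v * (v ^ 2 - 2 * A * v + D) := by
      intro v; ring
    have e2 : ∀ x : ZMod p, x * (x ^ 2 - 2 * (-2 * A) * x + ((-2 * A) ^ 2 - 4 * D)) =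
        x * (x ^ 2 + 4 * A * x + 256 * K) := by
      intro x
      have : (-2 * A) ^ 2 - 4 * D = 4 * (A ^ 2 - D) := by ring
      rw [this, hAD]; ring
    calc ∑ v : ZMod p, χ (v * (v ^ 2 - 2 * A * v + D))
        = ∑ v : ZMod p, χ (v * (v ^ 2 + (-2 * A) * v + D)) := by
          apply Finset.sum_congr rfl; intro v _; rw [e1]
      _ = ∑ x : ZMod p, χ (x * (x ^ 2 - 2 * (-2 * A) * x + ((-2 * A) ^ 2 - 4 * D))) := hkey
      _ = ∑ x : ZMod p, χ (x * (x ^ 2 + 4 * A * x + 256 * K)) := by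
          apply Finset.sum_congr rfl; intro x _; rw [e2]
  rw [hkey']
  -- Step 4: substitute x → 4x and divide by the square 64
  have haff2 : ∑ x : ZMod p, χ (x * (x ^ 2 + 4 * A * x + 256 * K)) =
      ∑ x : ZMod p, χ (x * (x ^ 2 + A * x + 16 * K)) := by
    have := sum_affine (4 : ZMod p) 0 h4 (fun x => χ (x * (x ^ 2 + 4 * A * x + 256 * K)))
    rw [← this]
    apply Finset.sum_congr rfl
    intro x _
    show χ _ = χ _
    have hid : (4 * x + 0) * ((4 * x + 0) ^ 2 + 4 * A * (4 * x + 0) + 256 * K) =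
        (8 : ZMod p) ^ 2 * (x * (x ^ 2 + A * x + 16 * K)) := by ring
    have h8 : (8 : ZMod p) ≠ 0 := by
      have : (8 : ZMod p) = 2 * 4 := by norm_num
      rw [this]; exact mul_ne_zero h2 h4
    rw [hid, chi_sq_mul _ _ h8]
  rw [haff2]
  -- Step 5: substitute x → (4K)⁻¹ x to reach g_k
  have h4K : (4 : ZMod p) * K ≠ 0 := mul_ne_zero h4 hK0
  have := sum_affine ((4 * K : ZMod p))⁻¹ 0 (inv_ne_zero h4K)
    (fun x => χ (x * (4 * K * x ^ 2 + A * x + 4)))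
  rw [← this]
  apply Finset.sum_congr rfl
  intro x _
  show χ _ = χ _
  have hid : ((4 * K : ZMod p))⁻¹ * x + 0 = (4 * K)⁻¹ * x := by ring
  have hid2 : ((4 * K : ZMod p))⁻¹ * x * (4 * K * ((4 * K)⁻¹ * x) ^ 2 + A * ((4 * K)⁻¹ * x) + 4) =
      ((4 * K : ZMod p)⁻¹) ^ 2 * (x * (x ^ 2 + A * x + 16 * K)) := by
    field_simp
    ring
  rw [hid, hid2, chi_sq_mul _ _ (inv_ne_zero h4K)]
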